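/- Let c ∈ ℝ and p = (c,c) ∈ ℝ². Let f be a real-valued function that is continuously differentiable on an open neighborhood of p. Suppose f(t,t) = 0 for all t in some neighborhood of c, and suppose there exists a sequence of points (α_n, β_n) → p with α_n ≠ β_n and f(α_n, β_n) = 0 for all n. Then both first partial derivatives of f vanish at p: ∂_α f(p) = ∂_β f(p) = 0. -/

import Mathlib

open Filter Topology

/-- If `f` is `C¹` near `p = (c,c)`, vanishes on the diagonal near `c`, and vanishes on a
sequence of off-diagonal points converging to `p`, then both first partial derivatives of
`f` vanish at `p`. -/
theorem stmt12 (c : ℝ) (f : ℝ × ℝ → ℝ) (s : Set (ℝ × ℝ))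
    (hs : IsOpen s) (hps : ((c, c) : ℝ × ℝ) ∈ s) (hf : ContDiffOn ℝ 1 f s)
    (hdiag : ∀ᶠ t in 𝓝 c, f (t, t) = 0)
    (u : ℕ → ℝ × ℝ) (hu : Tendsto u atTop (𝓝 ((c, c) : ℝ × ℝ)))
    (hne : ∀ n : ℕ, (u n).1 ≠ (u n).2) (hz : ∀ n : ℕ, f (u n) = 0) :
    deriv (fun x => f (x, c)) c = 0 ∧ deriv (fun y => f (c, y)) c = 0 := by
  set p : ℝ × ℝ := (c, c) with hp
  have hdiff : ∀ q ∈ s, DifferentiableAt ℝ f q := fun q hq =>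
    (hf.differentiableOn one_ne_zero).differentiableAt (hs.mem_nhds hq)
  set φ : ℝ × ℝ → ℝ := fun q => fderiv ℝ f q (1, 0) with hφdef
  have hfdc : ContinuousOn (fun q => fderiv ℝ f q) s :=
    hf.continuousOn_fderiv_of_isOpen hs le_rfl
  have hφc : ContinuousOn φ s := hfdc.clm_apply continuousOn_const
  -- the zero set of φ inside s
  set Z : Set (ℝ × ℝ) := {q | q ∈ s ∧ φ q = 0} with hZ
  -- p is in the closure of Z
  have hpZ : p ∈ closure Z := by
    rw [mem_closure_iff_nhds]
    intro U hU
    obtain ⟨T, hT, hTsub⟩ := hdiag.exists_mem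
    obtain ⟨ε, hε, hball⟩ := Metric.mem_nhds_iff.mp (inter_mem hU (hs.mem_nhds hps))
    have h2 : Tendsto (fun n => (u n).2) atTop (𝓝 c) :=
      (continuous_snd.tendsto p).comp hu
    have hev : ∀ᶠ n in atTop, u n ∈ Metric.ball p ε ∧ (u n).2 ∈ T :=
      (hu.eventually (Metric.ball_mem_nhds p hε)).and (h2.eventually hT)
    obtain ⟨n, hn1, hn2⟩ := hev.exists
    set α := (u n).1
    set β := (u n).2
    have hαβball : ((α, β) : ℝ × ℝ) ∈ Metric.ball p ε := hn1
    have hββball : ((β, β) : ℝ × ℝ) ∈ Metric.ball p ε := by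
      rw [Metric.mem_ball] at hαβball ⊢
      calc dist ((β, β) : ℝ × ℝ) p ≤ dist ((α, β) : ℝ × ℝ) p := by
            rw [Prod.dist_eq, Prod.dist_eq]
            exact max_le (le_max_right _ _) (le_max_right _ _)
        _ < ε := hαβball
    -- everything on the horizontal segment is in the ball
    have hseg : ∀ x ∈ Set.uIcc α β, ((x, β) : ℝ × ℝ) ∈ Metric.ball p ε := by
      intro x hx
      rw [← segment_eq_uIcc] at hx
      obtain ⟨a, b, ha, hb, hab, hx⟩ := hx
      have : ((x, β) : ℝ × ℝ) = a • ((α, β) : ℝ × ℝ) + b • ((β, β) : ℝ × ℝ) := by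
        rw [← hx]
        ext
        · simp
        · simp only [Prod.smul_mk, Prod.mk_add_mk, smul_eq_mul]
          linear_combination -β * hab
      rw [this]
      exact (convex_ball p ε) hαβball hββball ha hb hab
    have hsegs : ∀ x ∈ Set.uIcc α β, ((x, β) : ℝ × ℝ) ∈ s := fun x hx =>
      (hball (hseg x hx)).2
    have hderiv : ∀ x ∈ Set.uIcc α β,
        HasDerivAt (fun x => f (x, β)) (φ (x, β)) x := by
      intro x hx
      have hfd : HasFDerivAt f (fderiv ℝ f (x, β)) (x, β) :=
        (hdiff _ (hsegs x hx)).hasFDerivAt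
      have hg : HasDerivAt (fun x : ℝ => ((x, β) : ℝ × ℝ)) ((1 : ℝ), (0 : ℝ)) x :=
        HasDerivAt.prodMk (hasDerivAt_id x) (hasDerivAt_const x β)
      exact hfd.comp_hasDerivAt x hg
    -- MVT
    have hab : min α β < max α β := min_lt_max.mpr (hne n)
    have huIcc : Set.uIcc α β = Set.Icc (min α β) (max α β) := rfl
    have hgα : f (α, β) = 0 := hz n
    have hgβ : f (β, β) = 0 := hTsub _ hn2
    have hgmin : f (min α β, β) = 0 := by
      rcases min_cases α β with ⟨h, _⟩ | ⟨h, _⟩ <;> rw [h] <;> assumption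
    have hgmax : f (max α β, β) = 0 := by
      rcases max_cases α β with ⟨h, _⟩ | ⟨h, _⟩ <;> rw [h] <;> assumption
    obtain ⟨ξ, hξmem, hξ⟩ := exists_hasDerivAt_eq_slope (fun x => f (x, β))
      (fun x => φ (x, β)) hab
      (fun x hx => (hderiv x (by rw [huIcc]; exact hx)).continuousAt.continuousWithinAt)
      (fun x hx => hderiv x (by rw [huIcc]; exact Set.Ioo_subset_Icc_self hx))
    have hξI : ξ ∈ Set.uIcc α β := by
      rw [huIcc]; exact Set.Ioo_subset_Icc_self hξmem
    have hφξ : φ (ξ, β) = 0 := by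
      rw [hξ, hgmin, hgmax]; simp [slope]
    refine ⟨(ξ, β), ?_, hsegs ξ hξI, hφξ⟩
    exact (hball (hseg ξ hξI)).1
  -- continuity of φ at p gives φ p = 0
  have hφp : φ p = 0 := by
    have hca : ContinuousAt φ p := hφc.continuousAt (hs.mem_nhds hps)
    have h1 : φ p ∈ closure (φ '' Z) := mem_closure_image hca hpZ
    have h2 : φ '' Z ⊆ {0} := by
      rintro x ⟨q, hq, rfl⟩; exact hq.2
    have := (closure_mono h2) h1
    rwa [closure_singleton, Set.mem_singleton_iff] at this
  -- the diagonal derivative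
  have hdiagderiv : HasDerivAt (fun t => f (t, t)) (fderiv ℝ f p (1, 1)) c := by
    have hfd : HasFDerivAt f (fderiv ℝ f p) p := (hdiff p hps).hasFDerivAt
    have hg : HasDerivAt (fun t : ℝ => ((t, t) : ℝ × ℝ)) ((1 : ℝ), (1 : ℝ)) c :=
      HasDerivAt.prodMk (hasDerivAt_id c) (hasDerivAt_id c)
    exact hfd.comp_hasDerivAt_of_eq c hg rfl
  have hdiag0 : fderiv ℝ f p (1, 1) = 0 := by
    have h1 : deriv (fun t => f (t, t)) c = deriv (fun _ : ℝ => (0 : ℝ)) c :=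
      Filter.EventuallyEq.deriv_eq hdiag
    rw [← hdiagderiv.deriv, h1, deriv_const]
  have hsum : fderiv ℝ f p (1, 0) + fderiv ℝ f p (0, 1) = 0 := by
    rw [← ContinuousLinearMap.map_add]
    have : ((1 : ℝ), (0 : ℝ)) + ((0 : ℝ), (1 : ℝ)) = ((1 : ℝ), (1 : ℝ)) := by
      simp [Prod.mk_add_mk]
    rw [this, hdiag0]
  have hψp : fderiv ℝ f p (0, 1) = 0 := by
    have : φ p = fderiv ℝ f p (1, 0) := rfl
    rw [this] at hφp
    linarith
  constructor
  · have h : HasDerivAt (fun x => f (x, c)) (fderiv ℝ f p (1, 0)) c := by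
      have hfd : HasFDerivAt f (fderiv ℝ f p) p := (hdiff p hps).hasFDerivAt
      have hg : HasDerivAt (fun x : ℝ => ((x, c) : ℝ × ℝ)) ((1 : ℝ), (0 : ℝ)) c :=
        HasDerivAt.prodMk (hasDerivAt_id c) (hasDerivAt_const c c)
      exact hfd.comp_hasDerivAt_of_eq c hg rfl
    rw [h.deriv]
    exact hφp
  · have h : HasDerivAt (fun y => f (c, y)) (fderiv ℝ f p (0, 1)) c := by
      have hfd : HasFDerivAt f (fderiv ℝ f p) p := (hdiff p hps).hasFDerivAt
      have hg : HasDerivAt (fun y : ℝ => ((c, y) : ℝ × ℝ)) ((0 : ℝ), (1 : ℝ)) c :=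
        HasDerivAt.prodMk (hasDerivAt_const c c) (hasDerivAt_id c)
      exact hfd.comp_hasDerivAt_of_eq c hg rfl
    rw [h.deriv]
    exact hψp
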